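/- Let n, m be positive integers and fix real numbers y > 0 and z with n^m · m^n · y² < z^(n+m) (which forces z > 0 if n+m is even, and in general z^(n+m) > 0). Then the polynomial p(r) = ((z+r)/n)^m · ((z-r)/m)^n - y² has exactly one zero in the open interval (0, |z|). -/

import Mathlib

open Set

set_option maxHeartbeats 1000000 in
lemma key_lemma (a b : ℕ) (ha : 0 < a) (hb : 0 < b) (y z : ℝ) (hy : 0 < y) (hz : 0 < z)
    (hD : (a : ℝ) ^ b * (b : ℝ) ^ a * y ^ 2 < z ^ (a + b)) :
    ∃! r : ℝ, r ∈ Set.Ioo 0 z ∧ ((z + r) / a) ^ b * ((z - r) / b) ^ a - y ^ 2 = 0 := by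
  obtain ⟨a', rfl⟩ : ∃ a', a = a' + 1 := ⟨a - 1, (Nat.succ_pred_eq_of_pos ha).symm⟩
  obtain ⟨b', rfl⟩ : ∃ b', b = b' + 1 := ⟨b - 1, (Nat.succ_pred_eq_of_pos hb).symm⟩
  push_cast at hD ⊢
  set A : ℝ := (a' : ℝ) + 1 with hAdef
  set B : ℝ := (b' : ℝ) + 1 with hBdef
  have hApos : 0 < A := by positivity
  have hBpos : 0 < B := by positivity
  set f : ℝ → ℝ := fun r => ((z + r) / A) ^ (b' + 1) * ((z - r) / B) ^ (a' + 1) with hfdef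
  have hcont : Continuous f := by
    apply Continuous.mul <;> apply Continuous.pow <;> fun_prop
  -- derivative
  have hderiv : ∀ x : ℝ, HasDerivAt f
      ((((b' : ℝ) + 1) * ((z + x) / A) ^ b' * (1 / A)) * ((z - x) / B) ^ (a' + 1)
        + ((z + x) / A) ^ (b' + 1) * (((a' : ℝ) + 1) * ((z - x) / B) ^ a' * (-1 / B))) x := by
    intro x
    have h1 : HasDerivAt (fun r => (z + r) / A) (1 / A) x := by
      simpa using ((hasDerivAt_id x).const_add z).div_const A
    have h2 : HasDerivAt (fun r => (z - r) / B) (-1 / B) x := by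
      simpa using ((hasDerivAt_id x).const_sub z).div_const B
    have h1p := h1.pow (b' + 1)
    have h2p := h2.pow (a' + 1)
    simp only [Nat.add_sub_cancel] at h1p h2p
    have := h1p.mul h2p
    refine this.congr_deriv ?_
    simp only [Pi.pow_apply]
    push_cast
    ring
  -- value at 0
  have hf0 : y ^ 2 < f 0 := by
    have hf0' : f 0 = z ^ (a' + 1 + (b' + 1)) / (A ^ (b' + 1) * B ^ (a' + 1)) := by
      rw [hfdef]
      field_simp
      simp only [add_zero, sub_zero, div_pow]
      field_simp
      ring
    rw [hf0', lt_div_iff₀ (by positivity)]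
    calc y ^ 2 * (A ^ (b' + 1) * B ^ (a' + 1)) = A ^ (b' + 1) * B ^ (a' + 1) * y ^ 2 := by ring
    _ < z ^ (a' + 1 + (b' + 1)) := hD
  -- value at z
  have hfz : f z = 0 := by
    rw [hfdef]; simp
  -- critical point
  set rs : ℝ := max 0 (z * (B - A) / (A + B)) with hrsdef
  have hrs0 : 0 ≤ rs := le_max_left _ _
  have hrsz : rs < z := by
    apply max_lt hz
    rw [div_lt_iff₀ (by positivity)]
    nlinarith
  -- strict anti on [rs, z]
  have hanti : StrictAntiOn f (Icc rs z) := by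
    apply strictAntiOn_of_deriv_neg (convex_Icc _ _) hcont.continuousOn
    intro x hx
    rw [interior_Icc] at hx
    obtain ⟨hx1, hx2⟩ := hx
    rw [(hderiv x).deriv]
    have hxpos : 0 < x := lt_of_le_of_lt hrs0 hx1
    have hU : 0 < (z + x) / A := by positivity
    have hV : 0 < (z - x) / B := by
      apply div_pos (by linarith) hBpos
    have hxstar : z * (B - A) / (A + B) < x := lt_of_le_of_lt (le_max_right _ _) hx1
    have hlin : (z - x) / A < (z + x) / B := by
      rw [div_lt_div_iff₀ hApos hBpos]
      rw [div_lt_iff₀ (by positivity)] at hxstar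
      nlinarith
    have hfac : (((b' : ℝ) + 1) * ((z + x) / A) ^ b' * (1 / A)) * ((z - x) / B) ^ (a' + 1)
        + ((z + x) / A) ^ (b' + 1) * (((a' : ℝ) + 1) * ((z - x) / B) ^ a' * (-1 / B))
        = ((z + x) / A) ^ b' * ((z - x) / B) ^ a' * ((z - x) / A - (z + x) / B) := by
      rw [pow_succ, pow_succ]
      field_simp
      ring
    rw [hfac]
    apply mul_neg_of_pos_of_neg (by positivity)
    linarith
  -- strict mono on [0, rs]
  have hmono : StrictMonoOn f (Icc 0 rs) := by
    apply strictMonoOn_of_deriv_pos (convex_Icc _ _) hcont.continuousOn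
    intro x hx
    rw [interior_Icc] at hx
    obtain ⟨hx1, hx2⟩ := hx
    rw [(hderiv x).deriv]
    have hxz : x < z := lt_trans hx2 hrsz
    have hU : 0 < (z + x) / A := by positivity
    have hV : 0 < (z - x) / B := by
      apply div_pos (by linarith) hBpos
    have hxstar : x < z * (B - A) / (A + B) := by
      rw [hrsdef] at hx2
      rcases lt_max_iff.mp hx2 with h | h
      · linarith
      · exact h
    have hlin : (z + x) / B < (z - x) / A := by
      rw [div_lt_div_iff₀ hBpos hApos]
      rw [lt_div_iff₀ (by positivity)] at hxstar
      nlinarith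
    have hfac : (((b' : ℝ) + 1) * ((z + x) / A) ^ b' * (1 / A)) * ((z - x) / B) ^ (a' + 1)
        + ((z + x) / A) ^ (b' + 1) * (((a' : ℝ) + 1) * ((z - x) / B) ^ a' * (-1 / B))
        = ((z + x) / A) ^ b' * ((z - x) / B) ^ a' * ((z - x) / A - (z + x) / B) := by
      rw [pow_succ, pow_succ]
      field_simp
      ring
    rw [hfac]
    apply mul_pos (by positivity)
    linarith
  -- f rs > y^2
  have hfrs : y ^ 2 < f rs := by
    rcases eq_or_lt_of_le hrs0 with h | h
    · rw [← h]; exact hf0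
    · have := hmono ⟨le_refl 0, hrs0⟩ ⟨hrs0, le_refl rs⟩ h
      linarith
  -- existence via IVT
  have hIVT : y ^ 2 ∈ f '' (Ioo rs z) := by
    apply intermediate_value_Ioo' (le_of_lt hrsz) hcont.continuousOn
    rw [hfz]
    exact ⟨by positivity, hfrs⟩
  obtain ⟨r, hrmem, hfr⟩ := hIVT
  -- any solution lies in Icc rs z
  have hclaim : ∀ s : ℝ, s ∈ Ioo 0 z → f s = y ^ 2 → s ∈ Icc rs z := by
    intro s hs hfs
    refine ⟨?_, le_of_lt hs.2⟩
    by_contra hcon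
    push_neg at hcon
    have hrspos : 0 < rs := lt_of_le_of_lt (le_of_lt hs.1) hcon
    have := hmono ⟨le_refl 0, hrs0⟩ ⟨le_of_lt hs.1, le_of_lt hcon⟩ hs.1
    -- f 0 < f s, but f s = y^2 < f 0
    rw [hfs] at this
    linarith
  refine ⟨r, ⟨⟨lt_of_le_of_lt hrs0 hrmem.1, hrmem.2⟩, sub_eq_zero_of_eq hfr⟩, ?_⟩
  rintro s ⟨hs, hfs⟩
  have hfs' : f s = y ^ 2 := sub_eq_zero.mp hfs
  have hr' : f r = y ^ 2 := hfr
  exact hanti.injOn (hclaim s hs hfs') (hclaim r ⟨lt_of_le_of_lt hrs0 hrmem.1, hrmem.2⟩ hr')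
    (by rw [hfs', hr'])

theorem stmt_5 (n m : ℕ) (hn : 0 < n) (hm : 0 < m) (y z : ℝ) (hy : 0 < y)
    (hD : (n : ℝ) ^ m * (m : ℝ) ^ n * y ^ 2 < z ^ (n + m))
    (p : ℝ → ℝ) (hp : ∀ r, p r = ((z + r) / n) ^ m * ((z - r) / m) ^ n - y ^ 2) :
    ∃! r : ℝ, r ∈ Set.Ioo 0 |z| ∧ p r = 0 := by
  have hzpow : (0 : ℝ) < z ^ (n + m) := lt_trans (by positivity) hD
  have hz0 : z ≠ 0 := by
    intro h
    rw [h, zero_pow (by omega)] at hzpow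
    exact lt_irrefl 0 hzpow
  rcases hz0.lt_or_gt with hz | hz
  · -- z < 0 : n + m must be even
    have heven : Even (n + m) := by
      by_contra hodd
      rw [Nat.not_even_iff_odd] at hodd
      have := hodd.pow_neg hz
      linarith
    rw [abs_of_neg hz]
    set w : ℝ := -z with hwdef
    have hw : 0 < w := by rw [hwdef]; linarith
    have hD' : (m : ℝ) ^ n * (n : ℝ) ^ m * y ^ 2 < w ^ (m + n) := by
      have hwp : w ^ (m + n) = z ^ (n + m) := by
        rw [hwdef, Even.neg_pow (by rwa [add_comm] at heven), add_comm]
      rw [hwp]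
      linarith [hD]
    have key := key_lemma m n hm hn y w hy hw hD'
    have hsign : (-1 : ℝ) ^ m * (-1 : ℝ) ^ n = 1 := by
      rw [← pow_add]
      exact Even.neg_one_pow (by rwa [add_comm] at heven)
    have hpt : ∀ r : ℝ, ((z + r) / n) ^ m * ((z - r) / m) ^ n
        = ((w + r) / m) ^ n * ((w - r) / n) ^ m := by
      intro r
      have h1 : (z + r) / (n : ℝ) = -((w - r) / n) := by rw [hwdef]; ring
      have h2 : (z - r) / (m : ℝ) = -((w + r) / m) := by rw [hwdef]; ring
      rw [h1, h2]
      calc (-((w - r) / (n : ℝ))) ^ m * (-((w + r) / (m : ℝ))) ^ n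
          = ((-1 : ℝ) ^ m * (-1 : ℝ) ^ n) * (((w - r) / n) ^ m * ((w + r) / m) ^ n) := by
            rw [neg_pow ((w - r) / (n : ℝ)) m, neg_pow ((w + r) / (m : ℝ)) n]; ring
        _ = ((w + r) / m) ^ n * ((w - r) / n) ^ m := by rw [hsign]; ring
    simp only [hp, hpt]
    exact key
  · -- z > 0
    rw [abs_of_pos hz]
    have key := key_lemma n m hn hm y z hy hz hD
    simp only [hp]
    exact key
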